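/- (Lemma A.3) Assume ℓ > 4 and let (j, m) be a stationary solution. Then 2j = −m(ℓ/2 − 1)/(ℓ/2 − 1) < (ℓ/2 − 1)^{−1}, and m(ℓ/2 + 1) = −m(ℓ/2 − 1) > 0. -/

import Mathlib

open Real Set

/-- The force profile `g(x) = ∫_{x-1}^x 1_{y ≤ ℓ/2} dy − ∫_x^{x+1} 1_{y ≤ ℓ/2} dy`. -/
noncomputable def gfun (ℓ : ℝ) (x : ℝ) : ℝ :=
  (∫ y in (x - 1)..x, if y ≤ ℓ / 2 then (1 : ℝ) else 0) -
  (∫ y in x..(x + 1), if y ≤ ℓ / 2 then (1 : ℝ) else 0)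

/-- An IVP solution with parameter `j`: a differentiable `m` on `[0, ℓ]` with `m 0 = 0`
and `m'(x) = -2j + βλ(1 - m(x)²) g(x)` on `[0, ℓ]`. -/
def IsIVPSolution (β lam ℓ j : ℝ) (m : ℝ → ℝ) : Prop :=
  m 0 = 0 ∧ ∀ x ∈ Icc (0 : ℝ) ℓ,
    HasDerivAt m (-2 * j + β * lam * (1 - m x ^ 2) * gfun ℓ x) x

/-- A stationary solution: an IVP solution which also satisfies `m ℓ = 0`. -/
def IsStationarySolution (β lam ℓ j : ℝ) (m : ℝ → ℝ) : Prop :=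
  IsIVPSolution β lam ℓ j m ∧ m ℓ = 0


open Filter

section Aux

lemma int_ind (u v c : ℝ) (h : u ≤ v) :
    (∫ y in u..v, if y ≤ c then (1:ℝ) else 0) = min v c - min u c := by
  have h1 : (fun y => if y ≤ c then (1:ℝ) else 0) = (Iic c).indicator (fun _ => (1:ℝ)) := by
    funext y; simp [Set.indicator_apply, mem_Iic]
  rw [show (∫ y in u..v, if y ≤ c then (1:ℝ) else 0) = ∫ y in u..v, (Iic c).indicator (fun _ => (1:ℝ)) y from by rw [h1]]
  rw [intervalIntegral.integral_of_le h,
      MeasureTheory.setIntegral_indicator measurableSet_Iic]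
  have h2 : Ioc u v ∩ Iic c = Ioc u (min v c) := by
    ext y; simp only [mem_inter_iff, mem_Ioc, mem_Iic, le_min_iff]; tauto
  rw [h2, MeasureTheory.setIntegral_const, MeasureTheory.measureReal_def, Real.volume_Ioc, smul_eq_mul, mul_one]
  rcases le_total u c with h' | h'
  · rw [min_eq_left h', ENNReal.toReal_ofReal (by simp [le_min_iff, h, h'])]
  · rw [min_eq_right h', min_eq_right (h'.trans h),
        ENNReal.ofReal_eq_zero.mpr (by linarith), ENNReal.toReal_zero]
    ring

lemma gfun_eq (ℓ x : ℝ) :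
    gfun ℓ x = 2 * min x (ℓ/2) - min (x-1) (ℓ/2) - min (x+1) (ℓ/2) := by
  unfold gfun
  rw [int_ind _ _ _ (by linarith), int_ind _ _ _ (by linarith)]
  ring

lemma gfun_nonneg (ℓ x : ℝ) : 0 ≤ gfun ℓ x := by
  rw [gfun_eq]
  rcases le_total x (ℓ/2) with h | h <;> rcases le_total (x-1) (ℓ/2) with h1 | h1 <;>
    rcases le_total (x+1) (ℓ/2) with h2 | h2 <;>
    simp [min_eq_left, min_eq_right, h, h1, h2] <;> linarith

lemma gfun_zero_left (ℓ x : ℝ) (h : x ≤ ℓ/2 - 1) : gfun ℓ x = 0 := by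
  rw [gfun_eq, min_eq_left (by linarith), min_eq_left (by linarith), min_eq_left (by linarith)]
  ring

lemma gfun_zero_right (ℓ x : ℝ) (h : ℓ/2 + 1 ≤ x) : gfun ℓ x = 0 := by
  rw [gfun_eq, min_eq_right (by linarith), min_eq_right (by linarith), min_eq_right (by linarith)]
  ring

lemma gfun_pos (ℓ x : ℝ) (h1 : ℓ/2 - 1 < x) (h2 : x < ℓ/2 + 1) : 0 < gfun ℓ x := by
  rw [gfun_eq]
  rcases le_total x (ℓ/2) with h | h
  · rw [min_eq_left h, min_eq_left (by linarith), min_eq_right (by linarith)]; linarith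
  · rw [min_eq_right h, min_eq_left (by linarith), min_eq_right (by linarith)]; linarith

lemma gfun_mid (ℓ : ℝ) : gfun ℓ (ℓ/2) = 1 := by
  rw [gfun_eq, min_self, min_eq_left (by linarith), min_eq_right (by linarith)]
  ring

lemma no_upcross {f d : ℝ → ℝ} {s t c : ℝ} (hst : s ≤ t)
    (hd : ∀ x ∈ Icc s t, HasDerivAt f (d x) x)
    (hs : f s ≤ c) (hcross : ∀ x ∈ Ico s t, f x = c → d x < 0) :
    f t ≤ c := by
  by_contra hft
  push_neg at hft
  set S := {x | x ∈ Icc s t ∧ f x ≤ c} with hS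
  have hSne : s ∈ S := ⟨⟨le_refl s, hst⟩, hs⟩
  have hSbdd : BddAbove S := ⟨t, fun x hx => hx.1.2⟩
  set z := sSup S with hz
  have hzmem : z ∈ Icc s t := ⟨le_csSup hSbdd hSne, csSup_le ⟨s, hSne⟩ (fun x hx => hx.1.2)⟩
  have hcontz : ContinuousAt f z := (hd z hzmem).continuousAt
  -- f z ≤ c
  have hfz : f z ≤ c := by
    by_contra hfz
    push_neg at hfz
    have hev : ∀ᶠ y in nhds z, c < f y := hcontz.eventually (eventually_gt_nhds hfz)
    rw [Metric.eventually_nhds_iff] at hev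
    obtain ⟨ε, hε, hball⟩ := hev
    obtain ⟨y, hyS, hy⟩ := exists_lt_of_lt_csSup ⟨s, hSne⟩ (show z - ε < z by linarith)
    have : c < f y := hball (by rw [Real.dist_eq, abs_lt]; constructor <;>
      [linarith; linarith [le_csSup hSbdd hyS]])
    exact absurd hyS.2 (not_le.mpr this)
  have hzt : z < t := lt_of_le_of_ne hzmem.2 (fun h => by rw [h] at hfz; linarith)
  -- everything to the right of z exceeds c
  have hright : ∀ y ∈ Ioc z t, c < f y := by
    intro y hy
    by_contra hyc
    push_neg at hyc
    have : y ∈ S := ⟨⟨hzmem.1.trans hy.1.le, hy.2⟩, hyc⟩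
    exact absurd (le_csSup hSbdd this) (not_le.mpr hy.1)
  -- f z = c
  have hfzc : f z = c := by
    refine le_antisymm hfz ?_
    have htend : Tendsto f (nhdsWithin z (Ioi z)) (nhds (f z)) :=
      hcontz.continuousWithinAt.tendsto
    refine ge_of_tendsto htend ?_
    filter_upwards [Ioc_mem_nhdsGT_of_mem ⟨le_refl z, hzt⟩] with y hy
    exact (hright y hy).le
  have hdz : d z < 0 := hcross z ⟨hzmem.1, hzt⟩ hfzc
  -- slope argument
  have hslope : Tendsto (slope f z) (nhdsWithin z (Ioi z)) (nhds (d z)) :=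
    ((hasDerivAt_iff_tendsto_slope.mp (hd z hzmem)).mono_left
      (nhdsWithin_mono z (fun y hy => ne_of_gt hy)))
  have hev1 : ∀ᶠ y in nhdsWithin z (Ioi z), slope f z y < 0 :=
    hslope.eventually (eventually_lt_nhds hdz)
  have hev2 : Ioc z t ∈ nhdsWithin z (Ioi z) := Ioc_mem_nhdsGT_of_mem ⟨le_refl z, hzt⟩
  obtain ⟨y, hy1, hy2⟩ := (hev1.and (eventually_of_mem hev2 (fun y hy => hy))).exists
  have hyz : z < y := hy2.1
  rw [slope_def_field] at hy1
  have : f y < f z := by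
    have := hy1
    rw [div_neg_iff] at this
    rcases this with ⟨h1, h2⟩ | ⟨h1, h2⟩
    · linarith
    · linarith
  rw [hfzc] at this
  exact absurd (hright y hy2) (not_lt.mpr this.le)

lemma no_downcross {f d : ℝ → ℝ} {s t c : ℝ} (hst : s ≤ t)
    (hd : ∀ x ∈ Icc s t, HasDerivAt f (d x) x)
    (hs : c ≤ f s) (hcross : ∀ x ∈ Ico s t, f x = c → 0 < d x) :
    c ≤ f t := by
  have := no_upcross (f := fun x => -f x) (d := fun x => -d x) (c := -c) hst
    (fun x hx => (hd x hx).neg) (by simpa using hs)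
    (fun x hx hfx => by
      simp only [neg_lt_zero]
      exact hcross x hx (by linarith [neg_eq_iff_eq_neg.mp hfx]))
  simpa using this

end Aux

set_option maxHeartbeats 1000000 in
/-- Lemma A.3. -/
theorem stationary_current_formula (β lam ℓ : ℝ) (hβ : 0 < β) (hlam : 0 < lam) (hℓ : 4 < ℓ)
    (j : ℝ) (m : ℝ → ℝ) (hm : IsStationarySolution β lam ℓ j m) :
    2 * j = -(m (ℓ / 2 - 1)) / (ℓ / 2 - 1) ∧
    2 * j < (ℓ / 2 - 1)⁻¹ ∧
    m (ℓ / 2 + 1) = -(m (ℓ / 2 - 1)) ∧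
    0 < m (ℓ / 2 + 1) := by
  obtain ⟨⟨hm0, hm'⟩, hmend⟩ := hm
  have hd : ∀ x ∈ Icc (0:ℝ) ℓ,
      HasDerivAt m ((fun x => -2 * j + β * lam * (1 - m x ^ 2) * gfun ℓ x) x) x := hm'
  set a := ℓ/2 - 1 with ha_def
  set b := ℓ/2 + 1 with hb_def
  have ha1 : (1:ℝ) < a := by rw [ha_def]; linarith
  have ha0 : (0:ℝ) < a := by linarith
  have hbl : b ≤ ℓ := by rw [hb_def]; linarith
  have hab : a ≤ b := by rw [ha_def, hb_def]; linarith
  have hcont : ContinuousOn m (Icc (0:ℝ) ℓ) :=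
    fun x hx => (hd x hx).continuousAt.continuousWithinAt
  have hlin : ∀ (k e x : ℝ), HasDerivAt (fun y => k * y + e) k x := by
    intro k e x
    simpa using ((hasDerivAt_id x).const_mul k).add_const e
  -- m a = -2 j a
  have hma : m a = -2*j*a := by
    have key := eq_of_has_deriv_right_eq (a := 0) (b := a) (f := m)
      (g := fun x => -2*j * x + 0) (f' := fun _ => -2*j)
      (fun x hx => by
        have h := (hd x ⟨hx.1, hx.2.le.trans (by linarith)⟩).hasDerivWithinAt (s := Ici x)
        simp only [gfun_zero_left ℓ x (hx.2.le), mul_zero, add_zero] at h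
        exact h)
      (fun x _ => ((hlin (-2*j) 0 x)).hasDerivWithinAt)
      (hcont.mono (Icc_subset_Icc le_rfl (by linarith)))
      (Continuous.continuousOn (by continuity))
      (by simpa using hm0)
    simpa using key a ⟨ha0.le, le_rfl⟩
  -- m b = 2 j a
  have hmb : m b = 2*j*a := by
    have key := eq_of_has_deriv_right_eq (a := b) (b := ℓ) (f := m)
      (g := fun x => -2*j * x + (2*j*b + m b)) (f' := fun _ => -2*j)
      (fun x hx => by
        have h := (hd x ⟨(by linarith [hx.1] : (0:ℝ) ≤ x), hx.2.le⟩).hasDerivWithinAt (s := Ici x)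
        simp only [gfun_zero_right ℓ x hx.1, mul_zero, add_zero] at h
        exact h)
      (fun x _ => ((hlin (-2*j) (2*j*b + m b) x)).hasDerivWithinAt)
      (hcont.mono (Icc_subset_Icc (by linarith) le_rfl))
      (Continuous.continuousOn (by continuity))
      (by ring)
    have hℓval := key ℓ ⟨hbl, le_rfl⟩
    simp only [hmend] at hℓval
    rw [ha_def, hb_def]; rw [hb_def] at hℓval; linarith
  -- j > 0
  have hj : 0 < j := by
    rcases lt_trichotomy j 0 with hjn | hj0 | hjp
    · exfalso
      have key := no_downcross (f := m)
        (d := fun x => -2 * j + β * lam * (1 - m x ^ 2) * gfun ℓ x)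
        (s := 0) (t := b) (c := 0) (by linarith)
        (fun x hx => hd x ⟨hx.1, hx.2.trans hbl⟩) (le_of_eq hm0.symm)
        (fun x _ hfx => by
          simp only [hfx]
          nlinarith [mul_nonneg (mul_nonneg hβ.le hlam.le) (gfun_nonneg ℓ x)])
      rw [hmb] at key; nlinarith
    · exfalso
      have hma0 : m a = 0 := by rw [hma, hj0]; ring
      have hmb0 : m b = 0 := by rw [hmb, hj0]; ring
      have hdmem : ∀ x ∈ Icc a b, x ∈ Icc (0:ℝ) ℓ :=
        fun x hx => ⟨by linarith [hx.1], hx.2.trans hbl⟩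
      have hlow : ∀ x ∈ Icc a b, 0 ≤ m x := by
        intro x hx
        by_contra hneg; push_neg at hneg
        have hcneg : max (m x / 2) (-(1/2)) < 0 := max_lt (by linarith) (by norm_num)
        have hcgt : (-1:ℝ) < max (m x / 2) (-(1/2)) :=
          lt_of_lt_of_le (by norm_num) (le_max_right _ _)
        have key := no_downcross (f := m)
          (d := fun x => -2 * j + β * lam * (1 - m x ^ 2) * gfun ℓ x)
          (s := a) (t := x) (c := max (m x / 2) (-(1/2))) hx.1
          (fun y hy => hd y (hdmem y ⟨hy.1, hy.2.trans hx.2⟩))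
          (by rw [hma0]; exact hcneg.le)
          (fun y hy hfy => by
            have hya : a < y := by
              rcases lt_or_eq_of_le hy.1 with h | h
              · exact h
              · exfalso; rw [← h, hma0] at hfy; linarith
            have hyb : y < b := lt_of_lt_of_le hy.2 hx.2
            have hg := gfun_pos ℓ y hya hyb
            simp only [hfy, hj0]
            have h1 : 0 < 1 - (max (m x / 2) (-(1/2)))^2 := by nlinarith
            nlinarith [mul_pos (mul_pos hβ hlam) (mul_pos h1 hg)])
        have h2 := le_max_left (m x / 2) (-(1/2))
        linarith
      have hup : ∀ x ∈ Icc a b, m x ≤ 1 := by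
        intro x hx
        by_contra hgt; push_neg at hgt
        have key := no_upcross (f := m)
          (d := fun x => -2 * j + β * lam * (1 - m x ^ 2) * gfun ℓ x)
          (s := a) (t := x) (c := (1 + m x)/2) hx.1
          (fun y hy => hd y (hdmem y ⟨hy.1, hy.2.trans hx.2⟩))
          (by rw [hma0]; linarith)
          (fun y hy hfy => by
            have hya : a < y := by
              rcases lt_or_eq_of_le hy.1 with h | h
              · exact h
              · exfalso; rw [← h, hma0] at hfy; linarith
            have hyb : y < b := lt_of_lt_of_le hy.2 hx.2
            have hg := gfun_pos ℓ y hya hyb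
            simp only [hfy, hj0]
            have h1 : (0:ℝ) < ((1 + m x)/2)^2 - 1 := by nlinarith
            nlinarith [mul_pos (mul_pos hβ hlam) (mul_pos h1 hg)])
        linarith
      have hmono : MonotoneOn m (Icc a b) := by
        apply monotoneOn_of_deriv_nonneg (convex_Icc a b)
          (hcont.mono (Icc_subset_Icc (by linarith) hbl))
        · intro x hx
          rw [interior_Icc] at hx
          exact ((hd x (hdmem x (Ioo_subset_Icc_self hx))).differentiableAt).differentiableWithinAt
        · intro x hx
          rw [interior_Icc] at hx
          have hxI := Ioo_subset_Icc_self hx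
          rw [(hd x (hdmem x hxI)).deriv]
          simp only [hj0]
          have h1 : 0 ≤ 1 - m x ^ 2 := by nlinarith [hlow x hxI, hup x hxI]
          have h2 : 0 ≤ β * lam * (1 - m x ^ 2) * gfun ℓ x :=
            mul_nonneg (mul_nonneg (mul_nonneg hβ.le hlam.le) h1) (gfun_nonneg ℓ x)
          linarith
      have hzero : ∀ x ∈ Icc a b, m x = 0 := by
        intro x hx
        refine le_antisymm ?_ (hlow x hx)
        have := hmono hx (⟨hab, le_rfl⟩ : b ∈ Icc a b) hx.2
        rw [hmb0] at this; exact this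
      have hmemI : Icc a b ∈ nhds (ℓ/2) :=
        Icc_mem_nhds (by rw [ha_def]; linarith) (by rw [hb_def]; linarith)
      have hEq : m =ᶠ[nhds (ℓ/2)] (fun _ => 0) :=
        eventually_of_mem hmemI (fun x hx => hzero x hx)
      have h1 : HasDerivAt m 0 (ℓ/2) :=
        (hasDerivAt_const (ℓ/2) (0:ℝ)).congr_of_eventuallyEq hEq
      have h2 := hd (ℓ/2) ⟨by linarith, by linarith⟩
      have huniq : (0:ℝ) = -2*j + β*lam*(1 - m (ℓ/2)^2)*gfun ℓ (ℓ/2) := h1.unique h2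
      rw [hzero (ℓ/2) ⟨by rw [ha_def]; linarith, by rw [hb_def]; linarith⟩,
        gfun_mid, hj0] at huniq
      nlinarith [mul_pos hβ hlam]
    · exact hjp
  -- 2 j a < 1
  have hlt : 2*j*a < 1 := by
    by_contra hge; push_neg at hge
    have key := no_upcross (f := m)
      (d := fun x => -2 * j + β * lam * (1 - m x ^ 2) * gfun ℓ x)
      (s := a) (t := b) (c := -1) hab
      (fun x hx => hd x ⟨by linarith [hx.1], hx.2.trans hbl⟩)
      (by rw [hma]; linarith)
      (fun x _ hfx => by simp only [hfx]; norm_num; linarith)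
    rw [hmb] at key; linarith
  refine ⟨?_, ?_, ?_, ?_⟩
  · rw [hma]; field_simp
  · rw [show (a)⁻¹ = 1/a by ring, lt_div_iff₀ ha0]; linarith
  · rw [hma, hmb]; ring
  · rw [hmb]; positivity
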